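/- Let H(θ) = Δ(θ) + diag(q₁,…,q_{ν−1},0) where Δ(θ) is the ν×ν matrix with top-left identity block I_{ν−1}, last column entries −1/√ξ, and corner entry 1 − 2c₀(θ)/ξ with ξ = ν−1+2d and c₀(θ) = Σ_{j=1}^d cos θ_j. Then det(H(θ) − λ·I_ν) = (1/ξ)[(ξ − ξλ − 2c₀(θ))·W(λ) + W'(λ)], where W(λ) = Π_{j=1}^{ν−1}(1 + q_j − λ). -/

import Mathlib

open Matrix BigOperators Finset

private lemma aux_det (n : ℕ) (q : Fin n → ℝ) (b d : ℝ) (t : ℝ)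
    (h : ∀ j, 1 + q j - t ≠ 0) :
    (Matrix.fromBlocks (Matrix.diagonal (fun j => 1 + q j - t))
      (Matrix.of fun _ (_ : Fin 1) => b)
      (Matrix.of fun (_ : Fin 1) _ => b)
      (Matrix.of fun (_ : Fin 1) (_ : Fin 1) => d)).det
      = (∏ j, (1 + q j - t)) * (d - b * b * ∑ j, (1 + q j - t)⁻¹) := by
  set v : Fin n → ℝ := fun j => 1 + q j - t with hv
  letI : Invertible (Matrix.diagonal v) :=
    ⟨Matrix.diagonal (fun j => (v j)⁻¹), by
      simp [Matrix.diagonal_mul_diagonal, inv_mul_cancel₀ (h _)]; funext i; exact inv_mul_cancel₀ (h i), by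
      simp [Matrix.diagonal_mul_diagonal, mul_inv_cancel₀ (h _)]; funext i; exact mul_inv_cancel₀ (h i)⟩
  have hinv : ⅟(Matrix.diagonal v) = Matrix.diagonal (fun j => (v j)⁻¹) := rfl
  rw [Matrix.det_fromBlocks₁₁, hinv, Matrix.det_diagonal]
  congr 1
  rw [Matrix.det_fin_one]
  simp [Matrix.mul_apply, Matrix.diagonal_apply, Finset.mul_sum, mul_ite, mul_zero,
    Finset.sum_ite_eq]
  ring_nf
  simp [add_sub_assoc]
  simp [hv, add_sub_assoc]

/-- Characteristic polynomial of the fiber Schrödinger operator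
`H(θ) = Δ(θ) + diag(q₁,…,q_{ν−1},0)` on the perturbed `d`-dimensional lattice:
`det(H(θ) − λI) = (1/ξ)[(ξ − ξλ − 2c₀)W(λ) + W'(λ)]`,
with `W(λ) = ∏_{j}(1 + q_j − λ)`, `ξ = ν − 1 + 2d`. Here the `ν−1 = n` vertices
carrying the potential are indexed by `Fin n` and the remaining vertex by `Fin 1`. -/
theorem perturbed_lattice_schrodinger_charpoly (d n : ℕ) (hd : 1 ≤ d) (hn : 1 ≤ n)
    (θ : Fin d → ℝ) (q : Fin n → ℝ)
    (ξ : ℝ) (hξ : ξ = (n : ℝ) + 2 * d)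
    (c₀ : ℝ) (hc₀ : c₀ = ∑ j, Real.cos (θ j))
    (H : Matrix (Fin n ⊕ Fin 1) (Fin n ⊕ Fin 1) ℝ)
    (hH : H = Matrix.fromBlocks
      (1 + Matrix.diagonal q)
      (Matrix.of fun _ (_ : Fin 1) => -1 / Real.sqrt ξ)
      (Matrix.of fun (_ : Fin 1) _ => -1 / Real.sqrt ξ)
      (Matrix.of fun (_ : Fin 1) (_ : Fin 1) => 1 - 2 * c₀ / ξ))
    (W : ℝ → ℝ) (hW : ∀ lam, W lam = ∏ j, (1 + q j - lam))
    (lam : ℝ) :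
    (H - lam • (1 : Matrix (Fin n ⊕ Fin 1) (Fin n ⊕ Fin 1) ℝ)).det
      = (1 / ξ) * ((ξ - ξ * lam - 2 * c₀) * W lam + deriv W lam) := by
  have hξpos : 0 < ξ := by
    rw [hξ]
    have h1 : (1:ℝ) ≤ (n:ℝ) := by exact_mod_cast hn
    have h2 : (1:ℝ) ≤ (d:ℝ) := by exact_mod_cast hd
    nlinarith
  have hb : (-1 / Real.sqrt ξ) * (-1 / Real.sqrt ξ) = 1 / ξ := by
    rw [div_mul_div_comm, Real.mul_self_sqrt hξpos.le]
    norm_num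
  have hblock : ∀ t : ℝ, H - t • (1 : Matrix (Fin n ⊕ Fin 1) (Fin n ⊕ Fin 1) ℝ)
      = Matrix.fromBlocks (Matrix.diagonal (fun j => 1 + q j - t))
        (Matrix.of fun _ (_ : Fin 1) => -1 / Real.sqrt ξ)
        (Matrix.of fun (_ : Fin 1) _ => -1 / Real.sqrt ξ)
        (Matrix.of fun (_ : Fin 1) (_ : Fin 1) => 1 - 2 * c₀ / ξ - t) := by
    intro t
    subst hH
    ext i j
    rcases i with i | i <;> rcases j with j | j
    · by_cases hij : i = j <;>
        simp [hij, Matrix.one_apply, Matrix.diagonal_apply]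
    · simp
    · simp
    · simp [Subsingleton.elim i j, Matrix.one_apply]
  set F : ℝ → ℝ := fun t => (H - t • (1 : Matrix (Fin n ⊕ Fin 1) (Fin n ⊕ Fin 1) ℝ)).det
    with hF
  set G : ℝ → ℝ := fun t => (1 - 2 * c₀ / ξ - t) * ∏ j, (1 + q j - t)
      - (1 / ξ) * ∑ j, ∏ k ∈ Finset.univ.erase j, (1 + q k - t) with hG
  have hFG : F = G := by
    have hS : Dense {t : ℝ | ∀ j, 1 + q j - t ≠ 0} := by
      have he : {t : ℝ | ∀ j, 1 + q j - t ≠ 0} = (Set.range (fun j => 1 + q j))ᶜ := by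
        ext t
        simp only [Set.mem_setOf_eq, Set.mem_compl_iff, Set.mem_range, not_exists, sub_ne_zero]
      rw [he]
      exact (Set.finite_range _).countable.dense_compl ℝ
    have hFc : Continuous F :=
      Continuous.matrix_det (continuous_const.sub (continuous_id.smul continuous_const))
    have hGc : Continuous G := by
      apply Continuous.sub
      · exact (by continuity : Continuous fun t : ℝ => (1 - 2 * c₀ / ξ - t)).mul
          (continuous_finset_prod _ fun j _ => by continuity)
      · exact continuous_const.mul (continuous_finset_sum _ fun j _ =>
          continuous_finset_prod _ fun k _ => by continuity)
    refine hFc.ext_on hS hGc ?_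
    intro t ht
    simp only [Set.mem_setOf_eq] at ht
    have hsum : ∑ j, ∏ k ∈ Finset.univ.erase j, (1 + q k - t)
        = (∏ j, (1 + q j - t)) * ∑ j, (1 + q j - t)⁻¹ := by
      rw [Finset.mul_sum]
      refine Finset.sum_congr rfl fun j _ => ?_
      rw [← Finset.prod_erase_mul Finset.univ _ (Finset.mem_univ j), mul_assoc,
        mul_inv_cancel₀ (ht j), mul_one]
    show (H - t • _).det = _
    rw [hblock t, aux_det n q _ _ t ht, hb]
    simp only [hG]
    rw [hsum]
    ring
  have hWf : W = fun t => ∏ j, (1 + q j - t) := funext hW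
  have hderiv : deriv W lam = ∑ j, -(∏ k ∈ Finset.univ.erase j, (1 + q k - lam)) := by
    rw [hWf]
    have h1 : ∀ j ∈ Finset.univ, HasDerivAt (fun t : ℝ => 1 + q j - t) (-1) lam := by
      intro j _
      exact (hasDerivAt_id lam).const_sub (1 + q j)
    have h2 : deriv (fun t : ℝ => ∏ j, (1 + q j - t)) lam
        = ∑ j, (∏ k ∈ Finset.univ.erase j, (1 + q k - lam)) • (-1 : ℝ) :=
      (HasDerivAt.fun_finset_prod h1).deriv
    rw [h2]
    simp [smul_eq_mul]
  have h3 : (H - lam • (1 : Matrix (Fin n ⊕ Fin 1) (Fin n ⊕ Fin 1) ℝ)).det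
      = (1 - 2 * c₀ / ξ - lam) * ∏ j, (1 + q j - lam)
        - (1 / ξ) * ∑ j, ∏ k ∈ Finset.univ.erase j, (1 + q k - lam) := congrFun hFG lam
  rw [h3, hW lam, hderiv]
  have hξ0 : ξ ≠ 0 := ne_of_gt hξpos
  field_simp
  rw [Finset.sum_neg_distrib]
  ring
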